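/- arXiv:2212.02314 — 2 statements merged into one kernel-verified Lean document; each statement's English description precedes it below -/
import Mathlib

section
/- (Attacker's optimal strategy, Proposition 1) Let σ be a full-rank density matrix and Π a positive semidefinite Hermitian operator on a finite-dimensional Hilbert space, and let β > 0. Then the unique minimizer over density matrices ρ of the functional Tr(Πρ) + β·S(ρ‖σ) is ρ* = exp(log σ − Π/β) / Tr(exp(log σ − Π/β)). -/
open Matrix ComplexOrder Kronecker
noncomputable section
variable {m n : Type*} [Fintype n] [DecidableEq n] [Fintype m] [DecidableEq m]

/-- Functional calculus for Hermitian matrices via the spectral theorem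
(junk value `0` on non-Hermitian input). -/
def matFun (f : ℝ → ℝ) (A : Matrix n n ℂ) : Matrix n n ℂ :=
  if hA : A.IsHermitian then
    (hA.eigenvectorUnitary : Matrix n n ℂ) *
      Matrix.diagonal (fun i => (f (hA.eigenvalues i) : ℂ)) *
      (star hA.eigenvectorUnitary : Matrix n n ℂ)
  else 0

/-- Matrix logarithm on the support (`Real.log 0 = 0` gives the `0 log 0 = 0` convention). -/
def matLog (A : Matrix n n ℂ) : Matrix n n ℂ := matFun Real.log A

/-- Matrix exponential (of a Hermitian matrix). -/
def matExp (A : Matrix n n ℂ) : Matrix n n ℂ := matFun Real.exp A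

/-- A density matrix: positive semidefinite with trace one. -/
def IsDensity (ρ : Matrix n n ℂ) : Prop := ρ.PosSemidef ∧ ρ.trace = 1

/-- Quantum relative entropy `S(ρ‖σ) = Tr (ρ (log ρ − log σ))`. -/
def qRelEnt (ρ σ : Matrix n n ℂ) : ℂ := (ρ * (matLog ρ - matLog σ)).trace

/-- `k`-fold tensor power of a matrix. -/
def tpow (ρ : Matrix n n ℂ) (k : ℕ) : Matrix (Fin k → n) (Fin k → n) ℂ :=
  Matrix.of fun i j => ∏ t, ρ (i t) (j t)

/-- Trace norm: the sum of singular values. -/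
def traceNorm (A : Matrix n n ℂ) : ℝ :=
  ∑ i, Real.sqrt ((Matrix.posSemidef_conjTranspose_mul_self A).1.eigenvalues i)

/-- Projection onto the strictly positive eigenspace of a Hermitian matrix. -/
def posProj (A : Matrix n n ℂ) : Matrix n n ℂ := matFun (fun x => if 0 < x then 1 else 0) A

/-- Positive part in the Jordan decomposition of a Hermitian matrix. -/
def posPart (A : Matrix n n ℂ) : Matrix n n ℂ := matFun (fun x => max x 0) A

/-- Projection onto the support of a Hermitian (e.g. PSD) matrix. -/
def suppProj (A : Matrix n n ℂ) : Matrix n n ℂ := matFun (fun x => if x = 0 then 0 else 1) A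

lemma continuousOn_finite (f : ℝ → ℝ) {s : Set ℝ} (hs : s.Finite) : ContinuousOn f s := by
  rw [continuousOn_iff_continuous_restrict]
  have : Finite s := hs
  exact continuous_of_discreteTopology

lemma matFun_eq_cfc {A : Matrix n n ℂ} (hA : A.IsHermitian) (f : ℝ → ℝ) :
    matFun f A = cfc f A := by
  rw [Matrix.IsHermitian.cfc_eq hA f, matFun, dif_pos hA]
  rfl

lemma matFun_isHermitian {A : Matrix n n ℂ} (hA : A.IsHermitian) (f : ℝ → ℝ) :
    (matFun f A).IsHermitian := by
  rw [matFun_eq_cfc hA]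
  exact cfc_predicate f A

-- scalar Klein
lemma scalar_klein_le {p q : ℝ} (hp : 0 ≤ p) (hq : 0 < q) :
    p - q ≤ p * (Real.log p - Real.log q) := by
  rcases eq_or_lt_of_le hp with h | hp
  · simp [← h]
    linarith
  · have h1 : Real.log (q / p) ≤ q / p - 1 := Real.log_le_sub_one_of_pos (by positivity)
    rw [Real.log_div hq.ne' hp.ne'] at h1
    have h2 := mul_le_mul_of_nonneg_left h1 hp.le
    have h3 : p * (q / p) = q := by field_simp
    nlinarith [h2, h3]

lemma scalar_klein_eq {p q : ℝ} (hp : 0 ≤ p) (hq : 0 < q)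
    (h : p - q = p * (Real.log p - Real.log q)) : p = q := by
  rcases eq_or_lt_of_le hp with h0 | hp
  · rw [← h0] at h; simp at h; linarith
  · by_contra hne
    have h1 : Real.log (q / p) < q / p - 1 :=
      Real.log_lt_sub_one_of_pos (by positivity) (by
        intro hc
        exact hne ((div_eq_one_iff_eq hp.ne').mp hc).symm)
    rw [Real.log_div hq.ne' hp.ne'] at h1
    have h2 := mul_lt_mul_of_pos_left h1 hp
    have h3 : p * (q / p) = q := by field_simp
    nlinarith [h2, h3]

-- unitary row/col sums
lemma unitary_row_sum {W : Matrix n n ℂ} (hW : W ∈ Matrix.unitaryGroup n ℂ) (i : n) :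
    ∑ j, Complex.normSq (W i j) = 1 := by
  have h := Matrix.mem_unitaryGroup_iff.mp hW
  have h2 := congrFun (congrFun h i) i
  rw [Matrix.mul_apply, Matrix.one_apply_eq] at h2
  have h3 : ((∑ j, Complex.normSq (W i j) : ℝ) : ℂ) = 1 := by
    push_cast
    rw [← h2]
    refine Finset.sum_congr rfl fun j _ => ?_
    rw [Matrix.star_apply, ← Complex.mul_conj]
    rfl
  exact_mod_cast h3

lemma unitary_col_sum {W : Matrix n n ℂ} (hW : W ∈ Matrix.unitaryGroup n ℂ) (j : n) :
    ∑ i, Complex.normSq (W i j) = 1 := by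
  have h := Matrix.mem_unitaryGroup_iff'.mp hW
  have h2 := congrFun (congrFun h j) j
  rw [Matrix.mul_apply, Matrix.one_apply_eq] at h2
  have h3 : ((∑ i, Complex.normSq (W i j) : ℝ) : ℂ) = 1 := by
    push_cast
    rw [← h2]
    refine Finset.sum_congr rfl fun i _ => ?_
    rw [Matrix.star_apply]
    rw [show star (W i j) * W i j = W i j * star (W i j) from mul_comm _ _, ← Complex.mul_conj]
    rfl
  exact_mod_cast h3

-- the trace workhorse
lemma trace_conj_mul_conj {U V : Matrix n n ℂ} (hU : U ∈ Matrix.unitaryGroup n ℂ)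
    (hV : V ∈ Matrix.unitaryGroup n ℂ) (p q : n → ℝ) :
    ((U * Matrix.diagonal (fun i => (p i : ℂ)) * star U) *
     (V * Matrix.diagonal (fun i => (q i : ℂ)) * star V)).trace
    = ((∑ i, ∑ j, p i * q j * Complex.normSq ((star U * V) i j) : ℝ) : ℂ) := by
  set W : Matrix n n ℂ := star U * V with hWdef
  have hsW : star W = star V * U := by
    rw [hWdef, StarMul.star_mul, star_star]
  have key : (U * Matrix.diagonal (fun i => (p i : ℂ)) * star U) *
      (V * Matrix.diagonal (fun i => (q i : ℂ)) * star V)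
      = U * (Matrix.diagonal (fun i => (p i : ℂ)) * W * Matrix.diagonal (fun i => (q i : ℂ))
          * star W) * star U := by
    have hUU : U * star U = 1 := Unitary.mul_star_self_of_mem hU
    rw [hWdef, hsW]
    simp only [Matrix.mul_assoc, hUU, Matrix.mul_one]
  rw [key, Matrix.trace_mul_comm, ← Matrix.mul_assoc, Unitary.star_mul_self_of_mem hU, Matrix.one_mul]
  rw [Matrix.trace]
  push_cast
  refine Finset.sum_congr rfl fun i _ => ?_
  rw [Matrix.diag_apply, Matrix.mul_apply]
  refine Finset.sum_congr rfl fun j _ => ?_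
  rw [Matrix.mul_apply]
  rw [Finset.sum_eq_single j]
  · rw [Matrix.diagonal_mul, Matrix.diagonal_apply_eq, Matrix.star_apply]
    have hn : W i j * star (W i j) = (Complex.normSq (W i j) : ℂ) := Complex.mul_conj _
    linear_combination ((p i : ℂ) * (q j : ℂ)) * hn
  · intro b _ hb
    rw [Matrix.diagonal_apply_ne _ hb]
    ring
  · intro hj; exact absurd (Finset.mem_univ j) hj

example : (RCLike.ofReal : ℝ → ℂ) = Complex.ofReal := rfl

lemma trace_conj_diag {U : Matrix n n ℂ} (hU : U ∈ Matrix.unitaryGroup n ℂ) (d : n → ℝ) :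
    (U * Matrix.diagonal (fun i => (d i : ℂ)) * star U).trace = ((∑ i, d i : ℝ) : ℂ) := by
  rw [Matrix.trace_mul_comm, ← Matrix.mul_assoc, Unitary.star_mul_self_of_mem hU,
    Matrix.one_mul, Matrix.trace_diagonal]
  push_cast
  rfl

-- spectral theorem in our preferred form
lemma spectral_form {A : Matrix n n ℂ} (hA : A.IsHermitian) :
    A = (hA.eigenvectorUnitary : Matrix n n ℂ) *
        Matrix.diagonal (fun i => (hA.eigenvalues i : ℂ)) *
        (star hA.eigenvectorUnitary : Matrix n n ℂ) := hA.spectral_theorem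

lemma matFun_apply {A : Matrix n n ℂ} (hA : A.IsHermitian) (f : ℝ → ℝ) :
    matFun f A = (hA.eigenvectorUnitary : Matrix n n ℂ) *
      Matrix.diagonal (fun i => (f (hA.eigenvalues i) : ℂ)) *
      (star hA.eigenvectorUnitary : Matrix n n ℂ) := dif_pos hA

lemma trace_mul_matFun_self {A : Matrix n n ℂ} (hA : A.IsHermitian) (f : ℝ → ℝ) :
    (A * matFun f A).trace
      = ((∑ i, hA.eigenvalues i * f (hA.eigenvalues i) : ℝ) : ℂ) := by
  set U := (hA.eigenvectorUnitary : Matrix n n ℂ) with hUdef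
  have hU : U ∈ Matrix.unitaryGroup n ℂ := SetLike.coe_mem _
  calc (A * matFun f A).trace
      = ((U * Matrix.diagonal (fun i => (hA.eigenvalues i : ℂ)) * star U) *
         (U * Matrix.diagonal (fun i => (f (hA.eigenvalues i) : ℂ)) * star U)).trace := by
        rw [← spectral_form hA, ← matFun_apply hA f]
    _ = ((∑ i, ∑ j, hA.eigenvalues i * f (hA.eigenvalues j) *
          Complex.normSq ((star U * U) i j) : ℝ) : ℂ) := trace_conj_mul_conj hU hU _ _
    _ = ((∑ i, hA.eigenvalues i * f (hA.eigenvalues i) : ℝ) : ℂ) := by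
        rw [Unitary.star_mul_self_of_mem hU]
        norm_cast
        refine Finset.sum_congr rfl fun i _ => ?_
        rw [Finset.sum_eq_single i]
        · rw [Matrix.one_apply_eq]; simp
        · intro b _ hb
          rw [Matrix.one_apply_ne' hb]
          simp
        · intro hi; exact absurd (Finset.mem_univ i) hi

lemma trace_matFun {A : Matrix n n ℂ} (hA : A.IsHermitian) (f : ℝ → ℝ) :
    (matFun f A).trace = ((∑ i, f (hA.eigenvalues i) : ℝ) : ℂ) := by
  rw [matFun_apply hA f]
  exact trace_conj_diag (SetLike.coe_mem _) _

lemma matFun_sub_const {A : Matrix n n ℂ} (hA : A.IsHermitian) (c : ℝ) :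
    matFun (fun x => x - c) A = A - (c : ℂ) • 1 := by
  rw [matFun_apply hA]
  have hdiag : (Matrix.diagonal (fun i => ((hA.eigenvalues i - c : ℝ) : ℂ)))
      = Matrix.diagonal (fun i => (hA.eigenvalues i : ℂ)) - (c : ℂ) • 1 := by
    ext i j
    by_cases h : i = j
    · subst h; simp
    · simp [Matrix.diagonal_apply_ne _ h, Matrix.one_apply_ne h]
  rw [hdiag, Matrix.mul_sub, Matrix.sub_mul]
  congr 1
  · exact (spectral_form hA).symm
  · rw [Matrix.mul_smul, Matrix.mul_one, Matrix.smul_mul,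
      Unitary.mul_star_self_of_mem (SetLike.coe_mem _)]

lemma matLog_gibbs {H : Matrix n n ℂ} (hH : H.IsHermitian) (Z : ℝ) (hZ : 0 < Z) :
    matFun Real.log (matFun (fun x => Real.exp x / Z) H) = H - ((Real.log Z : ℝ) : ℂ) • 1 := by
  have hg : (matFun (fun x => Real.exp x / Z) H).IsHermitian := matFun_isHermitian hH _
  rw [matFun_eq_cfc hg, matFun_eq_cfc hH]
  rw [← cfc_comp Real.log (fun x => Real.exp x / Z) H hH.isSelfAdjoint
      (continuousOn_finite _ ((Matrix.finite_real_spectrum (A := H)).image _))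
      (continuousOn_finite _ (Matrix.finite_real_spectrum (A := H)))]
  have : (Real.log ∘ fun x => Real.exp x / Z) = fun x => x - Real.log Z := by
    funext x
    simp [Function.comp, Real.log_div (Real.exp_ne_zero x) hZ.ne', Real.log_exp]
  rw [this, ← matFun_eq_cfc hH, matFun_sub_const hH]

lemma posSemidef_conj_diag {U : Matrix n n ℂ} (hU : U ∈ Matrix.unitaryGroup n ℂ) {d : n → ℝ}
    (hd : ∀ i, 0 ≤ d i) : (U * Matrix.diagonal (fun i => (d i : ℂ)) * star U).PosSemidef := by
  have h1 : (Matrix.diagonal (fun i => ((d i : ℝ) : ℂ))).PosSemidef :=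
    Matrix.posSemidef_diagonal_iff.mpr (fun i => by exact_mod_cast hd i)
  simpa [Matrix.star_eq_conjTranspose] using h1.mul_mul_conjTranspose_same U

set_option maxHeartbeats 1000000 in
lemma klein_key [Nonempty n] {H ρ : Matrix n n ℂ} (hH : H.IsHermitian) (hρ : ρ.PosSemidef)
    (hρ1 : ρ.trace = 1) :
    ∃ g : ℝ,
      (ρ * matFun Real.log ρ).trace - (ρ * H).trace = (g : ℂ) ∧
      -Real.log (∑ j, Real.exp (hH.eigenvalues j)) ≤ g ∧
      (g = -Real.log (∑ j, Real.exp (hH.eigenvalues j)) →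
        ρ = matFun (fun x => Real.exp x / (∑ j, Real.exp (hH.eigenvalues j))) H) := by
  classical
  have hρh : ρ.IsHermitian := hρ.1
  set U := (hρh.eigenvectorUnitary : Matrix n n ℂ) with hUdef
  set V := (hH.eigenvectorUnitary : Matrix n n ℂ) with hVdef
  have hU : U ∈ Matrix.unitaryGroup n ℂ := SetLike.coe_mem _
  have hV : V ∈ Matrix.unitaryGroup n ℂ := SetLike.coe_mem _
  set p := hρh.eigenvalues with hpdef
  set h := hH.eigenvalues with hhdef
  set W := star U * V with hWdef
  have hW : W ∈ Matrix.unitaryGroup n ℂ := mul_mem (Unitary.star_mem hU) hV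
  set Z := ∑ j, Real.exp (h j) with hZdef
  have hZpos : 0 < Z := Finset.sum_pos (fun j _ => Real.exp_pos _) Finset.univ_nonempty
  set q := fun j => Real.exp (h j) / Z with hqdef
  have hqpos : ∀ j, 0 < q j := fun j => div_pos (Real.exp_pos _) hZpos
  have hlogq : ∀ j, Real.log (q j) = h j - Real.log Z := fun j => by
    rw [hqdef, Real.log_div (Real.exp_ne_zero _) hZpos.ne', Real.log_exp]
  have hp0 : ∀ i, 0 ≤ p i := fun i => hρ.eigenvalues_nonneg i
  have sum_p : ∑ i, p i = 1 := by
    have t : ρ.trace = ((∑ i, p i : ℝ) : ℂ) := by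
      calc ρ.trace = (U * Matrix.diagonal (fun i => (p i : ℂ)) * star U).trace := by
            rw [← spectral_form hρh]
        _ = _ := trace_conj_diag hU _
    rw [hρ1] at t
    exact_mod_cast t.symm
  have row : ∀ i, ∑ j, Complex.normSq (W i j) = 1 := unitary_row_sum hW
  have col : ∀ j, ∑ i, Complex.normSq (W i j) = 1 := unitary_col_sum hW
  have sum_q : ∑ j, q j = 1 := by
    rw [hqdef, ← Finset.sum_div]; exact div_self hZpos.ne'
  have tr1 : (ρ * matFun Real.log ρ).trace = ((∑ i, p i * Real.log (p i) : ℝ) : ℂ) :=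
    trace_mul_matFun_self hρh _
  have tr2 : (ρ * H).trace
      = ((∑ i, ∑ j, p i * h j * Complex.normSq (W i j) : ℝ) : ℂ) := by
    calc (ρ * H).trace
        = ((U * Matrix.diagonal (fun i => (p i : ℂ)) * star U) *
           (V * Matrix.diagonal (fun j => (h j : ℂ)) * star V)).trace := by
          rw [← spectral_form hρh, ← spectral_form hH]
      _ = _ := trace_conj_mul_conj hU hV _ _
  set g := (∑ i, p i * Real.log (p i)) - ∑ i, ∑ j, p i * h j * Complex.normSq (W i j) with hgdef
  -- main rearrangement
  have main : g + Real.log Z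
      = ∑ i, ∑ j, Complex.normSq (W i j) * (p i * (Real.log (p i) - Real.log (q j))) := by
    have e1 : ∀ i, ∑ j, Complex.normSq (W i j) * (p i * (Real.log (p i) - Real.log (q j)))
        = p i * Real.log (p i) - (∑ j, p i * h j * Complex.normSq (W i j))
          + p i * Real.log Z := by
      intro i
      have estep : ∀ j, Complex.normSq (W i j) * (p i * (Real.log (p i) - Real.log (q j)))
          = Complex.normSq (W i j) * (p i * Real.log (p i))
            - p i * h j * Complex.normSq (W i j)
            + Complex.normSq (W i j) * (p i * Real.log Z) := fun j => by
        rw [hlogq j]; ring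
      rw [Finset.sum_congr rfl (fun j _ => estep j), Finset.sum_add_distrib,
        Finset.sum_sub_distrib, ← Finset.sum_mul, ← Finset.sum_mul, row i, one_mul, one_mul]
    rw [Finset.sum_congr rfl (fun i _ => e1 i), Finset.sum_add_distrib,
      Finset.sum_sub_distrib, ← Finset.sum_mul, sum_p, one_mul]
  have zero_sum : ∑ i, ∑ j, Complex.normSq (W i j) * (p i - q j) = 0 := by
    have e2 : ∀ i, ∑ j, Complex.normSq (W i j) * (p i - q j)
        = p i - ∑ j, Complex.normSq (W i j) * q j := by
      intro i
      have : ∀ j, Complex.normSq (W i j) * (p i - q j)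
          = Complex.normSq (W i j) * p i - Complex.normSq (W i j) * q j := fun j => by ring
      rw [Finset.sum_congr rfl (fun j _ => this j), Finset.sum_sub_distrib,
        ← Finset.sum_mul, row i, one_mul]
    rw [Finset.sum_congr rfl (fun i _ => e2 i), Finset.sum_sub_distrib, sum_p,
      Finset.sum_comm]
    have : ∀ j, ∑ i, Complex.normSq (W i j) * q j = q j := fun j => by
      rw [← Finset.sum_mul, col j, one_mul]
    rw [Finset.sum_congr rfl (fun j _ => this j), sum_q, sub_self]
  have term_le : ∀ i j, Complex.normSq (W i j) * (p i - q j)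
      ≤ Complex.normSq (W i j) * (p i * (Real.log (p i) - Real.log (q j))) := fun i j =>
    mul_le_mul_of_nonneg_left (scalar_klein_le (hp0 i) (hqpos j)) (Complex.normSq_nonneg _)
  have ineq : -Real.log Z ≤ g := by
    have hle : (0 : ℝ) ≤ g + Real.log Z := by
      rw [main, ← zero_sum]
      exact Finset.sum_le_sum fun i _ => Finset.sum_le_sum fun j _ => term_le i j
    linarith
  refine ⟨g, by rw [tr1, tr2, hgdef]; push_cast; ring, ineq, ?_⟩
  -- equality case
  intro heq
  have hzero : ∑ i, ∑ j, (Complex.normSq (W i j) * (p i * (Real.log (p i) - Real.log (q j)))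
      - Complex.normSq (W i j) * (p i - q j)) = 0 := by
    rw [Finset.sum_congr rfl (fun i _ => Finset.sum_sub_distrib _ _)]
    rw [Finset.sum_sub_distrib, ← main, zero_sum, heq]
    ring
  have hterm0 : ∀ i j, Complex.normSq (W i j) * (p i * (Real.log (p i) - Real.log (q j)))
      - Complex.normSq (W i j) * (p i - q j) = 0 := by
    have h1 := (Finset.sum_eq_zero_iff_of_nonneg (fun i _ =>
      Finset.sum_nonneg (fun j _ => sub_nonneg.mpr (term_le i j)))).mp hzero
    intro i j
    have h2 := (Finset.sum_eq_zero_iff_of_nonneg (fun j _ =>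
      sub_nonneg.mpr (term_le i j))).mp (h1 i (Finset.mem_univ i)) j (Finset.mem_univ j)
    exact h2
  have key : ∀ i j, W i j ≠ 0 → p i = q j := by
    intro i j hne
    have hD : Complex.normSq (W i j) ≠ 0 := fun hc => hne (Complex.normSq_eq_zero.mp hc)
    have := hterm0 i j
    rw [← mul_sub, mul_eq_zero] at this
    rcases this with hc | hc
    · exact absurd hc hD
    · exact scalar_klein_eq (hp0 i) (hqpos j) (by linarith)
  -- matrix equality
  have hWQW : W * Matrix.diagonal (fun j => (q j : ℂ)) * star W
      = Matrix.diagonal (fun i => (p i : ℂ)) := by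
    ext i k
    rw [Matrix.mul_apply]
    have estep : ∀ j, (W * Matrix.diagonal (fun j => (q j : ℂ))) i j * (star W) j k
        = (p i : ℂ) * (W i j * star (W k j)) := by
      intro j
      rw [Matrix.mul_diagonal, Matrix.star_apply]
      by_cases hz : W i j = 0
      · rw [hz]; ring
      · rw [← key i j hz]; ring
    rw [Finset.sum_congr rfl (fun j _ => estep j), ← Finset.mul_sum]
    have : ∑ j, W i j * star (W k j) = (1 : Matrix n n ℂ) i k := by
      rw [← Matrix.mem_unitaryGroup_iff.mp hW, Matrix.mul_apply]
      exact Finset.sum_congr rfl fun j _ => by rw [Matrix.star_apply]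
    rw [this]
    by_cases hik : i = k
    · subst hik; rw [Matrix.one_apply_eq, Matrix.diagonal_apply_eq]; ring
    · rw [Matrix.one_apply_ne hik, Matrix.diagonal_apply_ne _ hik]; ring
  have hUW : U * W = V := by
    rw [hWdef, ← Matrix.mul_assoc, Unitary.mul_star_self_of_mem hU, Matrix.one_mul]
  have hsWU : star W * star U = star V := by
    rw [← StarMul.star_mul, hUW]
  calc ρ = U * Matrix.diagonal (fun i => (p i : ℂ)) * star U := spectral_form hρh
    _ = U * (W * Matrix.diagonal (fun j => (q j : ℂ)) * star W) * star U := by rw [hWQW]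
    _ = (U * W) * Matrix.diagonal (fun j => (q j : ℂ)) * (star W * star U) := by
        simp only [Matrix.mul_assoc]
    _ = V * Matrix.diagonal (fun j => (q j : ℂ)) * star V := by rw [hUW, hsWU]
    _ = V * Matrix.diagonal (fun j => ((Real.exp (h j) / Z : ℝ) : ℂ)) * star V := by rw [hqdef]
    _ = matFun (fun x => Real.exp x / Z) H := (matFun_apply hH (fun x => Real.exp x / Z)).symm


lemma matLog_def (A : Matrix n n ℂ) : matLog A = matFun Real.log A := rfl

/-- Attacker's optimal strategy (Proposition 1): the unique minimizer over density
matrices of `Tr(Πρ) + β S(ρ‖σ)` is `exp(log σ − Π/β)/Tr exp(log σ − Π/β)`. -/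
theorem stmt3 (σ Pm : Matrix n n ℂ) (hσ : IsDensity σ) (hσpd : σ.PosDef)
    (hPm : Pm.PosSemidef) (β : ℝ) (hβ : 0 < β) :
    let ρstar : Matrix n n ℂ :=
      ((matExp (matLog σ - (β : ℂ)⁻¹ • Pm)).trace)⁻¹ • matExp (matLog σ - (β : ℂ)⁻¹ • Pm)
    let F : Matrix n n ℂ → ℂ := fun ρ => (Pm * ρ).trace + (β : ℂ) * qRelEnt ρ σ
    IsDensity ρstar ∧
    (∀ ρ, IsDensity ρ → F ρstar ≤ F ρ) ∧
    (∀ ρ, IsDensity ρ → F ρ = F ρstar → ρ = ρstar) := by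
  intro ρstar F
  rcases isEmpty_or_nonempty n with hn | hn
  · exact absurd hσ.2 (by simp [Matrix.trace])
  set H : Matrix n n ℂ := matLog σ - (β : ℂ)⁻¹ • Pm with hHdef
  have hβC : (β : ℂ) ≠ 0 := by exact_mod_cast hβ.ne'
  have hσh : σ.IsHermitian := hσ.1.1
  have hH : H.IsHermitian := by
    apply Matrix.IsHermitian.sub (matFun_isHermitian hσh Real.log)
    show ((β : ℂ)⁻¹ • Pm)ᴴ = (β : ℂ)⁻¹ • Pm
    rw [Matrix.conjTranspose_smul, hPm.1.eq]
    congr 1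
    simp
  set h := hH.eigenvalues with hhdef
  set V := (hH.eigenvectorUnitary : Matrix n n ℂ) with hVdef
  have hV : V ∈ Matrix.unitaryGroup n ℂ := SetLike.coe_mem _
  set Z := ∑ j, Real.exp (h j) with hZdef
  have hZpos : 0 < Z := Finset.sum_pos (fun j _ => Real.exp_pos _) Finset.univ_nonempty
  have hexp : matExp H = V * Matrix.diagonal (fun j => ((Real.exp (h j) : ℝ) : ℂ)) * star V :=
    matFun_apply hH Real.exp
  have htr : (matExp H).trace = (Z : ℂ) := by
    rw [hexp, trace_conj_diag hV]
  have hρstar_eq : ρstar = matFun (fun x => Real.exp x / Z) H := by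
    have h0 : ρstar = ((matExp H).trace)⁻¹ • matExp H := rfl
    have hsd : (Z : ℂ)⁻¹ • Matrix.diagonal (fun j => ((Real.exp (h j) : ℝ) : ℂ))
        = Matrix.diagonal (fun j => ((Real.exp (h j) / Z : ℝ) : ℂ)) := by
      ext i j
      by_cases hij : i = j
      · subst hij
        simp only [Matrix.smul_apply, Matrix.diagonal_apply_eq, smul_eq_mul]
        push_cast
        ring
      · simp [Matrix.diagonal_apply_ne _ hij]
    rw [h0, htr, hexp, matFun_apply hH (fun x => Real.exp x / Z)]
    rw [← Matrix.smul_mul, ← Matrix.mul_smul, hsd]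
  have hq0 : ∀ j, 0 ≤ Real.exp (h j) / Z := fun j => (div_pos (Real.exp_pos _) hZpos).le
  have hρstarPSD : ρstar.PosSemidef := by
    rw [hρstar_eq, matFun_apply hH (fun x => Real.exp x / Z)]
    exact posSemidef_conj_diag hV hq0
  have hρstar_tr : ρstar.trace = 1 := by
    rw [hρstar_eq, matFun_apply hH (fun x => Real.exp x / Z), trace_conj_diag hV]
    have : ∑ i, Real.exp (h i) / Z = 1 := by
      rw [← Finset.sum_div]
      exact div_self hZpos.ne'
    rw [this]
    norm_num
  have hDen : IsDensity ρstar := ⟨hρstarPSD, hρstar_tr⟩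
  have hFeq : ∀ ρ : Matrix n n ℂ,
      F ρ = (β : ℂ) * ((ρ * matLog ρ).trace - (ρ * H).trace) := by
    intro ρ
    have hF : F ρ = (Pm * ρ).trace + (β : ℂ) * (ρ * (matLog ρ - matLog σ)).trace := rfl
    have hρH : (ρ * H).trace = (ρ * matLog σ).trace - (β : ℂ)⁻¹ * (ρ * Pm).trace := by
      rw [hHdef, Matrix.mul_sub, Matrix.trace_sub, Matrix.mul_smul, Matrix.trace_smul, smul_eq_mul]
    rw [hF, Matrix.mul_sub, Matrix.trace_sub, hρH, Matrix.trace_mul_comm Pm ρ]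
    field_simp
    ring
  have hlog_rhostar : matLog ρstar = H - ((Real.log Z : ℝ) : ℂ) • 1 := by
    rw [matLog_def, hρstar_eq]
    exact matLog_gibbs hH Z hZpos
  have hGstar : (ρstar * matLog ρstar).trace - (ρstar * H).trace = ((-Real.log Z : ℝ) : ℂ) := by
    rw [hlog_rhostar, Matrix.mul_sub, Matrix.trace_sub, Matrix.mul_smul, Matrix.trace_smul,
      Matrix.mul_one, hρstar_tr]
    simp
  have hFstar : F ρstar = ((β * (-Real.log Z) : ℝ) : ℂ) := by
    rw [hFeq ρstar, hGstar]
    push_cast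
    ring
  refine ⟨hDen, ?_, ?_⟩
  · intro ρ hρ
    obtain ⟨g, hg1, hg2, -⟩ := klein_key hH hρ.1 hρ.2
    rw [← hhdef, ← hZdef] at hg2
    rw [← matLog_def] at hg1
    rw [hFeq ρ, hg1, hFstar]
    have : ((β * (-Real.log Z) : ℝ) : ℂ) ≤ ((β * g : ℝ) : ℂ) := by
      rw [Complex.real_le_real]
      exact mul_le_mul_of_nonneg_left hg2 hβ.le
    calc ((β * (-Real.log Z) : ℝ) : ℂ) ≤ ((β * g : ℝ) : ℂ) := this
      _ = (β : ℂ) * (g : ℂ) := by push_cast; ring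
  · intro ρ hρ hFρ
    obtain ⟨g, hg1, hg2, hg3⟩ := klein_key hH hρ.1 hρ.2
    rw [← hhdef, ← hZdef] at hg3
    rw [← matLog_def] at hg1
    rw [hFeq ρ, hg1, hFstar] at hFρ
    have hcast : (β : ℂ) * (g : ℂ) = ((β * g : ℝ) : ℂ) := by push_cast; ring
    rw [hcast] at hFρ
    have hreal : β * g = β * (-Real.log Z) := by exact_mod_cast hFρ
    have hg : g = -Real.log Z := mul_left_cancel₀ hβ.ne' hreal
    rw [hg3 hg, hρstar_eq]
end
end

section
/- (Helstrom optimal measurement) Let ρ₀, ρ₁ be density matrices on a finite-dimensional Hilbert space and τ > 0. Define Π* as the orthogonal projection onto the span of eigenvectors of ρ₁ − τρ₀ with strictly positive eigenvalues. Then for every operator Π with 0 ≤ Π ≤ 1, one has τ·Tr(Πρ₀) − Tr(Πρ₁) ≥ τ·Tr(Π*ρ₀) − Tr(Π*ρ₁); equivalently Π* minimizes the Bayes risk Tr((1−Π)ρ₁) + τ·Tr(Πρ₀). -/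
open Matrix ComplexOrder Kronecker
noncomputable section
variable {m n : Type*} [Fintype n] [DecidableEq n] [Fintype m] [DecidableEq m]

lemma diag_nonneg_psd (Q : Matrix n n ℂ) (hQ : Q.PosSemidef) (i : n) : 0 ≤ Q i i := by
  have := hQ.diag_nonneg (i := i)
  simpa [dotProduct, mulVec, Pi.single_apply] using this

lemma key (A : Matrix n n ℂ) (hA : A.IsHermitian) (P : Matrix n n ℂ)
    (hP : P.PosSemidef) (hP1 : ((1 : Matrix n n ℂ) - P).PosSemidef) :
    (P * A).trace ≤ (posProj A * A).trace := by
  set U : Matrix n n ℂ := (hA.eigenvectorUnitary : Matrix n n ℂ) with hU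
  have hUU : Uᴴ * U = 1 := by
    simpa [star_eq_conjTranspose] using
      (Matrix.mem_unitaryGroup_iff').mp hA.eigenvectorUnitary.2
  set D : Matrix n n ℂ := diagonal (fun i => (hA.eigenvalues i : ℂ)) with hD
  have hspec : A = U * D * Uᴴ := by
    have := hA.spectral_theorem
    simpa [star_eq_conjTranspose, hU, hD, Function.comp_def] using this
  set Q : Matrix n n ℂ := Uᴴ * P * U with hQdef
  have hQ : Q.PosSemidef := hP.conjTranspose_mul_mul_same U
  have hQ1 : ((1 : Matrix n n ℂ) - Q).PosSemidef := by
    have := hP1.conjTranspose_mul_mul_same U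
    have e : Uᴴ * (1 - P) * U = 1 - Q := by
      rw [Matrix.mul_sub, Matrix.mul_one, Matrix.sub_mul, hUU, hQdef]
    rwa [e] at this
  have hQd : ∀ i, 0 ≤ Q i i := diag_nonneg_psd Q hQ
  have hQd1 : ∀ i, 0 ≤ 1 - Q i i := by
    intro i
    have := diag_nonneg_psd _ hQ1 i
    simpa [Matrix.sub_apply, Matrix.one_apply] using this
  -- trace of P * A
  have h1 : (P * A).trace = ∑ i, Q i i * (hA.eigenvalues i : ℂ) := by
    calc (P * A).trace = (P * (U * D * Uᴴ)).trace := by rw [← hspec]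
      _ = (Uᴴ * (P * (U * D))).trace := by
          rw [← Matrix.mul_assoc, Matrix.trace_mul_comm]
      _ = (Q * D).trace := by rw [hQdef]; rw [Matrix.mul_assoc, Matrix.mul_assoc]
      _ = ∑ i, Q i i * (hA.eigenvalues i : ℂ) := by
          simp [hD, Matrix.trace, Matrix.mul_diagonal, Matrix.diag]
  have hF : (fun i => (((if 0 < hA.eigenvalues i then (1:ℝ) else 0) : ℝ) : ℂ))
      = fun i => if 0 < hA.eigenvalues i then (1:ℂ) else 0 := by
    ext i; split <;> simp
  set F : Matrix n n ℂ := diagonal (fun i => if 0 < hA.eigenvalues i then (1:ℂ) else 0) with hFdef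
  have hPP : posProj A = U * F * Uᴴ := by
    rw [posProj, matFun, dif_pos hA, star_eq_conjTranspose, hFdef, hF]
  have h2 : (posProj A * A).trace
      = ∑ i, (if 0 < hA.eigenvalues i then (1:ℂ) else 0) * (hA.eigenvalues i : ℂ) := by
    rw [hPP]
    conv_lhs => rw [hspec]
    have e1 : U * F * Uᴴ * (U * D * Uᴴ) = U * (F * (D * Uᴴ)) := by
      simp only [Matrix.mul_assoc]
      rw [← Matrix.mul_assoc Uᴴ U (D * Uᴴ), hUU, Matrix.one_mul]
    rw [e1, Matrix.trace_mul_comm]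
    simp only [Matrix.mul_assoc]
    rw [hUU, Matrix.mul_one]
    rw [hFdef, hD, Matrix.diagonal_mul_diagonal]
    simp [Matrix.trace_diagonal]
  rw [h1, h2]
  apply Finset.sum_le_sum
  intro i _
  obtain ⟨hre, him⟩ := Complex.le_def.mp (hQd i)
  obtain ⟨hre1, him1⟩ := Complex.le_def.mp (hQd1 i)
  have hre' : 0 ≤ (Q i i).re := by simpa using hre
  have him' : (Q i i).im = 0 := by simpa using him.symm
  have hr1 : (Q i i).re ≤ 1 := by
    have h := hre1
    simp [Complex.sub_re] at h
    linarith
  have hQi : Q i i = ((Q i i).re : ℂ) := by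
    apply Complex.ext <;> simp [him']
  rw [hQi]
  rw [show ((Q i i).re : ℂ) * (hA.eigenvalues i : ℂ)
      = (((Q i i).re * hA.eigenvalues i : ℝ) : ℂ) by push_cast; ring]
  by_cases hpos : 0 < hA.eigenvalues i
  · rw [if_pos hpos, one_mul, Complex.real_le_real]
    nlinarith
  · rw [if_neg hpos, zero_mul, show (0:ℂ) = ((0:ℝ):ℂ) by simp, Complex.real_le_real]
    push_neg at hpos
    nlinarith

/-- Helstrom's optimal measurement: the projection onto the positive eigenspace of
`ρ₁ − τρ₀` minimizes the Bayes risk among all `0 ≤ Π ≤ 1`. -/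
theorem stmt5 (ρ₀ ρ₁ : Matrix n n ℂ) (h₀ : IsDensity ρ₀) (h₁ : IsDensity ρ₁)
    (τ : ℝ) (hτ : 0 < τ) (Pm : Matrix n n ℂ)
    (hPm : Pm.PosSemidef) (hPm1 : ((1 : Matrix n n ℂ) - Pm).PosSemidef) :
    let Pstar : Matrix n n ℂ := posProj (ρ₁ - (τ : ℂ) • ρ₀)
    (τ : ℂ) * (Pstar * ρ₀).trace - (Pstar * ρ₁).trace ≤
      (τ : ℂ) * (Pm * ρ₀).trace - (Pm * ρ₁).trace ∧
    (((1 : Matrix n n ℂ) - Pstar) * ρ₁).trace + (τ : ℂ) * (Pstar * ρ₀).trace ≤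
      (((1 : Matrix n n ℂ) - Pm) * ρ₁).trace + (τ : ℂ) * (Pm * ρ₀).trace := by
  intro Pstar
  set A : Matrix n n ℂ := ρ₁ - (τ : ℂ) • ρ₀ with hAdef
  have hA : A.IsHermitian := by
    have h0 := h₀.1.1
    have h1 := h₁.1.1
    unfold Matrix.IsHermitian at *
    rw [hAdef, Matrix.conjTranspose_sub, Matrix.conjTranspose_smul, h0, h1]
    norm_num
  have hkey := key A hA Pm hPm hPm1
  have expand : ∀ P : Matrix n n ℂ,
      (P * A).trace = (P * ρ₁).trace - (τ : ℂ) * (P * ρ₀).trace := by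
    intro P
    rw [hAdef, Matrix.mul_sub, Matrix.trace_sub, Matrix.mul_smul, Matrix.trace_smul]
    simp
  have first : (τ : ℂ) * (Pstar * ρ₀).trace - (Pstar * ρ₁).trace ≤
      (τ : ℂ) * (Pm * ρ₀).trace - (Pm * ρ₁).trace := by
    have h1 := expand Pm
    have h2 := expand Pstar
    have : (Pm * A).trace ≤ (Pstar * A).trace := hkey
    rw [h1, h2] at this
    have h3 := neg_le_neg this
    simpa [neg_sub] using h3
  refine ⟨first, ?_⟩
  have e : ∀ P : Matrix n n ℂ,
      (((1 : Matrix n n ℂ) - P) * ρ₁).trace + (τ : ℂ) * (P * ρ₀).trace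
        = ρ₁.trace + ((τ : ℂ) * (P * ρ₀).trace - (P * ρ₁).trace) := by
    intro P
    rw [Matrix.sub_mul, Matrix.trace_sub, Matrix.one_mul]
    ring
  rw [e, e]
  exact add_le_add_right first _
end
end
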